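/- Let m > 0, let ψ: [0,∞) → ℝ be continuous and bounded, and let y ∈ C²([0,∞), ℝ) be a bounded solution to y''(t) + y'(t) − m·y(t) = ψ(t). Then limsup_{t→+∞} |y(t)| ≤ (1/m)·limsup_{t→+∞} |ψ(t)| and limsup_{t→+∞} |y'(t)| ≤ 2·limsup_{t→+∞} |ψ(t)|. -/

import Mathlib

open Filter


lemma key1 {w : ℝ → ℝ} (hw : Differentiable ℝ w) {a c T : ℝ} (ha : 0 < a)
    (h : ∀ t ≥ T, deriv w t + a * w t ≤ c) :
    ∀ t ≥ T, w t ≤ c/a + Real.exp (a*(T-t)) * (w T - c/a) := by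
  set φ : ℝ → ℝ := fun s => Real.exp (a*s) * (w s - c/a) with hφ
  have hφd : ∀ s, HasDerivAt φ (Real.exp (a*s) * (a*1) * (w s - c/a)
      + Real.exp (a*s) * deriv w s) s := by
    intro s
    exact (((hasDerivAt_id s).const_mul a).exp).mul ((hw s).hasDerivAt.sub_const (c/a))
  have hcont : Continuous φ := by
    exact continuous_iff_continuousAt.2 fun s => (hφd s).continuousAt
  have hA : AntitoneOn φ (Set.Ici T) := by
    apply antitoneOn_of_deriv_nonpos (convex_Ici T) hcont.continuousOn
    · intro x _; exact ((hφd x).differentiableAt).differentiableWithinAt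
    · intro x hx
      rw [interior_Ici] at hx
      rw [(hφd x).deriv]
      have h1 := h x (le_of_lt hx)
      have h2 := Real.exp_pos (a*x)
      have h3 : a * (c/a) = c := mul_div_cancel₀ c ha.ne'
      nlinarith [mul_le_mul_of_nonneg_left h1 h2.le]
  intro t ht
  have h3 : φ t ≤ φ T := hA Set.self_mem_Ici ht ht
  have h4 : w t - c/a ≤ Real.exp (a*(T-t)) * (w T - c/a) := by
    calc w t - c/a = Real.exp (-(a*t)) * (Real.exp (a*t) * (w t - c/a)) := by
          rw [← mul_assoc, ← Real.exp_add]; simp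
      _ ≤ Real.exp (-(a*t)) * (Real.exp (a*T) * (w T - c/a)) :=
          mul_le_mul_of_nonneg_left h3 (Real.exp_nonneg _)
      _ = Real.exp (a*(T-t)) * (w T - c/a) := by
          rw [← mul_assoc, ← Real.exp_add]; ring_nf
  linarith

lemma keyS {w : ℝ → ℝ} (hw : Differentiable ℝ w) {a c T : ℝ} (ha : 0 < a)
    (h : ∀ t ≥ T, |deriv w t + a * w t| ≤ c) :
    ∀ t ≥ T, |w t| ≤ c/a + Real.exp (a*(T-t)) * (|w T| + c/a) := by
  have hc : 0 ≤ c := le_trans (abs_nonneg _) (h T le_rfl)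
  have h1 := key1 hw ha (fun t ht => (abs_le.mp (h t ht)).2)
  have h2 : ∀ t ≥ T, deriv (fun s => -w s) t + a * (-w t) ≤ c := by
    intro t ht
    rw [deriv.fun_neg]
    have := (abs_le.mp (h t ht)).1
    linarith
  have h3 := key1 hw.neg ha h2
  intro t ht
  have e1 := h1 t ht
  have e2 := h3 t ht
  have hep : (0:ℝ) ≤ Real.exp (a*(T-t)) := Real.exp_nonneg _
  have hca : 0 ≤ c/a := div_nonneg hc ha.le
  rw [abs_le]
  constructor
  · have : Real.exp (a*(T-t)) * (-w T - c/a) ≤ Real.exp (a*(T-t)) * (|w T| + c/a) := by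
      apply mul_le_mul_of_nonneg_left _ hep
      have := neg_abs_le (w T); linarith
    simp only [Pi.neg_apply] at e2
    linarith
  · have : Real.exp (a*(T-t)) * (w T - c/a) ≤ Real.exp (a*(T-t)) * (|w T| + c/a) := by
      apply mul_le_mul_of_nonneg_left _ hep
      have := le_abs_self (w T); linarith
    linarith

lemma key2 {w : ℝ → ℝ} (hw : Differentiable ℝ w) {a c T M : ℝ} (ha : 0 < a)
    (hb : ∀ t ≥ T, |w t| ≤ M)
    (h : ∀ t ≥ T, -c ≤ deriv w t - a * w t) :
    ∀ t ≥ T, w t ≤ c/a := by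
  set φ : ℝ → ℝ := fun s => Real.exp (-(a*s)) * (w s - c/a) with hφ
  have hφd : ∀ s, HasDerivAt φ (Real.exp (-(a*s)) * (-(a*1)) * (w s - c/a)
      + Real.exp (-(a*s)) * deriv w s) s := by
    intro s
    exact ((((hasDerivAt_id s).const_mul a).neg).exp).mul ((hw s).hasDerivAt.sub_const (c/a))
  have hcont : Continuous φ := by exact continuous_iff_continuousAt.2 fun s => (hφd s).continuousAt
  have hM : MonotoneOn φ (Set.Ici T) := by
    apply monotoneOn_of_deriv_nonneg (convex_Ici T) hcont.continuousOn
    · intro x _; exact ((hφd x).differentiableAt).differentiableWithinAt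
    · intro x hx
      rw [interior_Ici] at hx
      rw [(hφd x).deriv]
      have h1 := h x (le_of_lt hx)
      have h2 := Real.exp_pos (-(a*x))
      have h3 : a * (c/a) = c := mul_div_cancel₀ c ha.ne'
      nlinarith [mul_le_mul_of_nonneg_left h1 h2.le]
  have htend : Tendsto φ atTop (nhds 0) := by
    apply squeeze_zero_norm' (a := fun s => Real.exp (-(a*s)) * (M + |c/a|))
    · filter_upwards [eventually_ge_atTop T] with s hs
      have h1 := hb s hs
      have h2 : |w s - c/a| ≤ M + |c/a| := by
        have := abs_sub_abs_le_abs_sub (w s) (c/a)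
        have := abs_sub (w s) (c/a)
        calc |w s - c/a| ≤ |w s| + |c/a| := abs_sub _ _
          _ ≤ M + |c/a| := by linarith
      calc ‖φ s‖ = Real.exp (-(a*s)) * |w s - c/a| := by
            simp [hφ, abs_mul, abs_of_nonneg (Real.exp_nonneg _)]
        _ ≤ Real.exp (-(a*s)) * (M + |c/a|) :=
            mul_le_mul_of_nonneg_left h2 (Real.exp_nonneg _)
    · rw [show (0:ℝ) = 0 * (M + |c/a|) by ring]
      apply Tendsto.mul_const
      apply Real.tendsto_exp_atBot.comp
      apply tendsto_neg_atBot_iff.mpr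
      exact (tendsto_id.const_mul_atTop ha)
  intro t ht
  have hφt : φ t ≤ 0 := by
    apply ge_of_tendsto htend
    filter_upwards [eventually_ge_atTop t] with s hs
    exact hM (Set.mem_Ici.mpr ht) (Set.mem_Ici.mpr (le_trans ht hs)) hs
  simp only [hφ] at hφt
  have hE := Real.exp_pos (-(a*t))
  by_contra hcon
  push_neg at hcon
  nlinarith [mul_pos hE (sub_pos.mpr hcon)]

lemma keyU {w : ℝ → ℝ} (hw : Differentiable ℝ w) {a c T M : ℝ} (ha : 0 < a)
    (hb : ∀ t ≥ T, |w t| ≤ M)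
    (h : ∀ t ≥ T, |deriv w t - a * w t| ≤ c) :
    ∀ t ≥ T, |w t| ≤ c/a := by
  have h1 := key2 hw ha hb (fun t ht => (abs_le.mp (h t ht)).1)
  have h2 : ∀ t ≥ T, -c ≤ deriv (fun s => -w s) t - a * (-w t) := by
    intro t ht
    rw [deriv.fun_neg]
    have := (abs_le.mp (h t ht)).2
    linarith
  have h3 := key2 hw.neg ha (M := M) (fun t ht => by rw [Pi.neg_apply, abs_neg]; exact hb t ht) h2
  intro t ht
  rw [abs_le]
  have := h3 t ht
  simp only [Pi.neg_apply] at this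
  exact ⟨by linarith, h1 t ht⟩


lemma tail_tendsto (a T K : ℝ) (ha : 0 < a) :
    Tendsto (fun t => Real.exp (a*(T-t)) * K) atTop (nhds 0) := by
  rw [show (0:ℝ) = 0*K by ring]
  apply Tendsto.mul_const
  apply Real.tendsto_exp_atBot.comp
  have h1 : Tendsto (fun t:ℝ => a*t) atTop atTop := tendsto_id.const_mul_atTop ha
  have h2 : Tendsto (fun t:ℝ => -(a*t)) atTop atBot := tendsto_neg_atBot_iff.mpr h1
  have h3 := tendsto_atBot_add_const_left atTop (a*T) h2
  convert h3 using 2 with t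
  ring

/-- Ultimate bounds for a bounded solution of y'' + y' - m y = ψ with m > 0. -/
theorem stmt_1 (m : ℝ) (hm : 0 < m) (ψ y : ℝ → ℝ)
    (hψc : Continuous ψ) (hψb : ∃ M, ∀ t ≥ (0:ℝ), |ψ t| ≤ M)
    (hy : ContDiff ℝ 2 y) (hyb : ∃ M, ∀ t ≥ (0:ℝ), |y t| ≤ M)
    (hode : ∀ t ≥ (0:ℝ), deriv (deriv y) t + deriv y t - m * y t = ψ t) :
    limsup (fun t => |y t|) atTop ≤ (1/m) * limsup (fun t => |ψ t|) atTop ∧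
    limsup (fun t => |deriv y t|) atTop ≤ 2 * limsup (fun t => |ψ t|) atTop := by
  obtain ⟨Mψ, hMψ⟩ := hψb
  obtain ⟨My, hMy⟩ := hyb
  have hMψ0 : 0 ≤ Mψ := le_trans (abs_nonneg _) (hMψ 0 le_rfl)
  have hMy0 : 0 ≤ My := le_trans (abs_nonneg _) (hMy 0 le_rfl)
  have hd1 : Differentiable ℝ y := hy.differentiable (by norm_num)
  have hd2 : Differentiable ℝ (deriv y) := by
    have h : ContDiff ℝ (1+1 : WithTop ℕ∞) y := by norm_num at hy ⊢; exact hy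
    exact (((contDiff_succ_iff_deriv (n := 1)).mp h).2.2).differentiable (by norm_num)
  set s := Real.sqrt (1+4*m) with hs
  have hs2 : s^2 = 1+4*m := Real.sq_sqrt (by linarith)
  have hs1 : 1 < s := by nlinarith [Real.sqrt_nonneg (1+4*m)]
  set r := (-1 + s)/2 with hr
  set μ := (1 + s)/2 with hμ
  have hrpos : 0 < r := by rw [hr]; linarith
  have hμpos : 0 < μ := by rw [hμ]; linarith
  have hμr : μ - r = 1 := by rw [hμ, hr]; ring
  have hrμ : r * μ = m := by rw [hr, hμ]; nlinarith
  set u : ℝ → ℝ := fun t => deriv y t + μ * y t with hu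
  have hud : Differentiable ℝ u := hd2.add (hd1.const_mul μ)
  have hu_deriv : ∀ t, deriv u t = deriv (deriv y) t + μ * deriv y t := fun t =>
    ((hd2 t).hasDerivAt.add ((hd1 t).hasDerivAt.const_mul μ)).deriv
  have hu_ode : ∀ t ≥ (0:ℝ), deriv u t - r * u t = ψ t := by
    intro t ht
    rw [hu_deriv t]
    have h1 := hode t ht
    simp only [hu]
    linear_combination h1 + deriv y t * hμr - y t * hrμ
  -- bound on y'
  have hv_ode : ∀ t ≥ (0:ℝ), |deriv (deriv y) t + 1 * deriv y t| ≤ Mψ + m * My := by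
    intro t ht
    have h1 := hode t ht
    have h2 : deriv (deriv y) t + 1 * deriv y t = ψ t + m * y t := by linarith
    rw [h2]
    calc |ψ t + m * y t| ≤ |ψ t| + |m| * |y t| := by
          rw [← abs_mul]; exact abs_add_le _ _
      _ ≤ Mψ + m * My := by
          rw [abs_of_pos hm]
          have h3 := hMψ t ht
          have h4 := hMy t ht
          nlinarith [abs_nonneg (y t)]
  have hvb := keyS hd2 one_pos hv_ode
  set Cv := (Mψ + m*My) + (|deriv y 0| + (Mψ + m*My)) with hCv
  have hvb' : ∀ t ≥ (0:ℝ), |deriv y t| ≤ Cv := by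
    intro t ht
    have h1 := hvb t ht
    simp only [div_one] at h1
    have h2 : Real.exp (1*(0-t)) ≤ 1 := by
      rw [Real.exp_le_one_iff]; linarith
    have h3 : (0:ℝ) ≤ |deriv y 0| + (Mψ + m*My) := by positivity
    have h4 : Real.exp (1*(0-t)) * (|deriv y 0| + (Mψ + m*My)) ≤
        1 * (|deriv y 0| + (Mψ + m*My)) := mul_le_mul_of_nonneg_right h2 h3
    rw [hCv]; linarith
  set Mu := Cv + μ * My with hMu
  have hub : ∀ t ≥ (0:ℝ), |u t| ≤ Mu := by
    intro t ht
    simp only [hu]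
    calc |deriv y t + μ * y t| ≤ |deriv y t| + |μ| * |y t| := by
          rw [← abs_mul]; exact abs_add_le _ _
      _ ≤ Cv + μ * My := by
          rw [abs_of_pos hμpos]
          exact add_le_add (hvb' t ht) (mul_le_mul_of_nonneg_left (hMy t ht) hμpos.le)
  -- limsup facts
  set L := limsup (fun t => |ψ t|) atTop with hL
  have hψbd : IsBoundedUnder (· ≤ ·) atTop (fun t => |ψ t|) :=
    ⟨Mψ, eventually_map.mpr (by filter_upwards [eventually_ge_atTop (0:ℝ)] with t ht using hMψ t ht)⟩
  have hL0 : 0 ≤ L := le_limsup_of_frequently_le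
    (Frequently.of_forall fun t => abs_nonneg _) hψbd
  have hψev : ∀ ε > (0:ℝ), ∃ T ≥ (0:ℝ), ∀ t ≥ T, |ψ t| ≤ L + ε := by
    intro ε hε
    have h1 : ∀ᶠ t in atTop, |ψ t| < L + ε := eventually_lt_of_limsup_lt (by linarith) hψbd
    obtain ⟨T0, hT0⟩ := eventually_atTop.mp h1
    exact ⟨max T0 0, le_max_right _ _,
      fun t ht => (hT0 t (le_trans (le_max_left _ _) ht)).le⟩
  -- eventual bound on |y|
  have hyev : ∀ ε > (0:ℝ), ∀ᶠ t in atTop, |y t| ≤ L/m + ε := by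
    intro ε hε
    obtain ⟨T, hT0, hT⟩ := hψev (m*ε/2) (by positivity)
    have hub2 : ∀ t ≥ T, |deriv u t - r * u t| ≤ L + m*ε/2 := by
      intro t ht
      rw [hu_ode t (le_trans hT0 ht)]
      exact hT t ht
    have hu3 := keyU hud hrpos (fun t ht => hub t (le_trans hT0 ht)) hub2
    have hy2 : ∀ t ≥ T, |deriv y t + μ * y t| ≤ (L + m*ε/2)/r := fun t ht => hu3 t ht
    have hy3 := keyS hd1 hμpos hy2
    have hq : (L + m*ε/2)/r/μ = L/m + ε/2 := by
      rw [div_div, hrμ]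
      field_simp
    have htail := tail_tendsto μ T (|y T| + (L + m*ε/2)/r/μ) hμpos
    have hev2 : ∀ᶠ t in atTop,
        Real.exp (μ*(T-t)) * (|y T| + (L + m*ε/2)/r/μ) < ε/2 :=
      Tendsto.eventually_lt_const (by positivity) htail
    filter_upwards [eventually_ge_atTop T, hev2] with t h1 h2
    have h5 := hy3 t h1
    rw [hq] at h5
    have h6 : Real.exp (μ*(T-t)) * (|y T| + (L + m*ε/2)/r/μ) < ε/2 := h2
    rw [hq] at h6
    linarith
  have hybd : IsBoundedUnder (· ≥ ·) atTop (fun t => |y t|) :=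
    ⟨0, eventually_map.mpr (Eventually.of_forall fun t => abs_nonneg _)⟩
  have hyco : IsCoboundedUnder (· ≤ ·) atTop (fun t => |y t|) :=
    hybd.isCoboundedUnder_le
  have part1 : limsup (fun t => |y t|) atTop ≤ L/m := by
    apply le_of_forall_pos_le_add
    intro ε hε
    exact limsup_le_of_le hyco (hyev ε hε)
  constructor
  · calc limsup (fun t => |y t|) atTop ≤ L/m := part1
      _ = (1/m) * L := by ring
  · have hvbd : IsBoundedUnder (· ≥ ·) atTop (fun t => |deriv y t|) :=
      ⟨0, eventually_map.mpr (Eventually.of_forall fun t => abs_nonneg _)⟩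
    have hvco : IsCoboundedUnder (· ≤ ·) atTop (fun t => |deriv y t|) :=
      hvbd.isCoboundedUnder_le
    apply le_of_forall_pos_le_add
    intro ε hε
    apply limsup_le_of_le hvco
    obtain ⟨T1, hT10, hT1⟩ := hψev (ε/4) (by positivity)
    obtain ⟨T2, hT2⟩ := eventually_atTop.mp (hyev (ε/(4*m)) (by positivity))
    set T' := max T1 T2 with hT'
    have hT'0 : (0:ℝ) ≤ T' := le_trans hT10 (le_max_left _ _)
    have hforce : ∀ t ≥ T', |deriv (deriv y) t + 1 * deriv y t| ≤ 2*L + ε/2 := by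
      intro t ht
      have hode2 := hode t (le_trans hT'0 ht)
      have h2 : deriv (deriv y) t + 1 * deriv y t = ψ t + m * y t := by linarith
      rw [h2]
      have h3 := hT1 t (le_trans (le_max_left _ _) ht)
      have h4 := hT2 t (le_trans (le_max_right _ _) ht)
      have h5 : m * (L/m + ε/(4*m)) = L + ε/4 := by field_simp
      calc |ψ t + m * y t| ≤ |ψ t| + |m| * |y t| := by
            rw [← abs_mul]; exact abs_add_le _ _
        _ ≤ (L + ε/4) + m * (L/m + ε/(4*m)) := by
            rw [abs_of_pos hm]
            exact add_le_add h3 (mul_le_mul_of_nonneg_left h4 hm.le)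
        _ = 2*L + ε/2 := by rw [h5]; ring
    have hkey := keyS hd2 one_pos hforce
    have htail := tail_tendsto 1 T' (|deriv y T'| + (2*L + ε/2)/1) one_pos
    have hev2 : ∀ᶠ t in atTop,
        Real.exp (1*(T'-t)) * (|deriv y T'| + (2*L + ε/2)/1) < ε/2 :=
      Tendsto.eventually_lt_const (by positivity) htail
    filter_upwards [eventually_ge_atTop T', hev2] with t h1 h2
    have h5 := hkey t h1
    rw [div_one] at h5 h2
    linarith
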